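/- Let H be a graph with maximum degree Δ ≥ 2 and let t(H) be the largest root of its matching polynomial M(H,t) = Σ_k (-1)^k m_k(H) t^{n-2k}. If 0 ≤ r < 1/t(H)² and 0 < t ≤ 1, then the evaluation of the multivariate matching polynomial with all edge variables equal to r satisfies F_H(r, t) = Σ_k (-1)^k m_k(H) r^k t^k > 0. -/

import Mathlib

open Finset
open scoped Classical
open Polynomial

/-- A matching of a simple graph: a finite set of edges, pairwise vertex-disjoint. -/
def IsMatchingSet {V : Type*} [DecidableEq V] (G : SimpleGraph V) (M : Finset (Sym2 V)) : Prop :=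
  (∀ e ∈ M, e ∈ G.edgeSet) ∧
    ∀ e ∈ M, ∀ f ∈ M, e ≠ f → ∀ v, v ∈ e → v ∉ f

/-- The finite set of all matchings of `G` (including the empty matching). -/
noncomputable def matchings {V : Type*} [Fintype V] [DecidableEq V] (G : SimpleGraph V) :
    Finset (Finset (Sym2 V)) :=
  Finset.univ.filter fun M => IsMatchingSet G M

/-- The matching polynomial `M(H,t) = Σ_k (-1)^k m_k(H) t^(n-2k)`, written as a sum over
matchings. -/
noncomputable def mp {V : Type*} [Fintype V] [DecidableEq V] (G : SimpleGraph V) (t : ℝ) : ℝ :=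
  ∑ M ∈ matchings G, (-1 : ℝ) ^ M.card * t ^ (Fintype.card V - 2 * M.card)

lemma empty_mem_matchings {V : Type*} [Fintype V] [DecidableEq V] (G : SimpleGraph V) :
    (∅ : Finset (Sym2 V)) ∈ matchings G := by
  refine Finset.mem_filter.mpr ⟨Finset.mem_univ _, ?_⟩; simp [IsMatchingSet]

lemma matchings_card_le {V : Type*} [Fintype V] [DecidableEq V] (G : SimpleGraph V)
    {M : Finset (Sym2 V)} (hM : M ∈ matchings G) : 2 * M.card ≤ Fintype.card V := by
  rw [matchings, Finset.mem_filter] at hM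
  obtain ⟨-, hE, hD⟩ := hM
  have hmem : ∀ e : Sym2 V, ∀ v : V, v ∈ e ↔ (v = e.out.1 ∨ v = e.out.2) := by
    intro e v
    conv_lhs => rw [← e.out_eq]
    exact Sym2.mem_iff
  have key : (M.biUnion fun e => {e.out.1, e.out.2}).card = 2 * M.card := by
    rw [Finset.card_biUnion]
    · rw [Finset.sum_congr rfl (fun e he => ?_), Finset.sum_const, smul_eq_mul, mul_comm]
      have hne : e.out.1 ≠ e.out.2 := by
        have hd : ¬ e.IsDiag := G.not_isDiag_of_mem_edgeSet (hE e he)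
        rwa [← e.out_eq, Sym2.mk_isDiag_iff] at hd
      exact Finset.card_pair hne
    · intro e he f hf hef
      rw [Function.onFun, Finset.disjoint_left]
      intro v hv hv'
      have h1 : v ∈ e := by rw [hmem]; simpa using hv
      have h2 : v ∈ f := by rw [hmem]; simpa using hv'
      exact hD e he f hf hef v h1 h2
  calc 2 * M.card = _ := key.symm
    _ ≤ Finset.univ.card := Finset.card_le_univ _
    _ = Fintype.card V := rfl

theorem stmt_7 {V : Type*} [Fintype V] [DecidableEq V] (H : SimpleGraph V)
    [DecidableRel H.Adj] (hΔ : 2 ≤ H.maxDegree)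
    (tH : ℝ) (htH : IsGreatest {s : ℝ | mp H s = 0} tH)
    (r t : ℝ) (hr0 : 0 ≤ r) (hr : r < 1 / tH ^ 2) (ht0 : 0 < t) (ht1 : t ≤ 1) :
    0 < ∑ M ∈ matchings H, (-1 : ℝ) ^ M.card * (r * t) ^ M.card := by
  classical
  set n := Fintype.card V with hn
  -- n ≥ 1
  have hn1 : 1 ≤ n := by
    by_contra h
    have h0 : n = 0 := by omega
    have : IsEmpty V := Fintype.card_eq_zero_iff.mp h0
    simp [SimpleGraph.maxDegree, Finset.univ_eq_empty, Option.getD] at hΔ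
  -- mp as polynomial
  set p : Polynomial ℝ :=
    ∑ M ∈ matchings H, C ((-1 : ℝ) ^ M.card) * X ^ (n - 2 * M.card) with hp
  have hpeval : ∀ s : ℝ, p.eval s = mp H s := by
    intro s; simp [hp, mp, eval_finset_sum, ← hn]
  have hdegle : p.natDegree ≤ n := by
    refine Polynomial.natDegree_sum_le_of_forall_le _ _ fun M hM => ?_
    calc (C ((-1 : ℝ) ^ M.card) * X ^ (n - 2 * M.card)).natDegree
        ≤ (n - 2 * M.card) := by
          simpa using Polynomial.natDegree_C_mul_le _ (X ^ (n - 2 * M.card))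
      _ ≤ n := Nat.sub_le _ _
  have hcoeff : p.coeff n = 1 := by
    rw [hp, Polynomial.finset_sum_coeff]
    rw [Finset.sum_eq_single (∅ : Finset (Sym2 V))]
    · simp
    · intro M hM hMne
      have hc : M.card ≠ 0 := by simpa [Finset.card_eq_zero] using hMne
      have hle := matchings_card_le H hM
      have hne : n - 2 * M.card ≠ n := by omega
      rw [Polynomial.coeff_C_mul, Polynomial.coeff_X_pow,
        if_neg (fun h => hne h.symm), mul_zero]
    · intro h; exact absurd (empty_mem_matchings H) h
  have hpne : p ≠ 0 := fun h => by simp [h] at hcoeff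
  have hdeg : p.natDegree = n :=
    le_antisymm hdegle (Polynomial.le_natDegree_of_ne_zero (by rw [hcoeff]; norm_num))
  have hlead : p.leadingCoeff = 1 := by
    rw [Polynomial.leadingCoeff, hdeg, hcoeff]
  -- mp positive above tH
  have hpos : ∀ s : ℝ, tH < s → 0 < mp H s := by
    intro s hs
    by_contra h
    push_neg at h
    have htend : Filter.Tendsto (fun x => p.eval x) Filter.atTop Filter.atTop := by
      apply Polynomial.tendsto_atTop_of_leadingCoeff_nonneg
      · rw [Polynomial.degree_eq_natDegree hpne, hdeg]
        exact_mod_cast hn1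
      · rw [hlead]; norm_num
    obtain ⟨y, hy, hyval⟩ := Filter.exists_lt_of_tendsto_atTop htend s 0
    have hcont : ContinuousOn (fun x => p.eval x) (Set.Icc s y) :=
      (Polynomial.continuous p).continuousOn
    have h0mem : (0 : ℝ) ∈ Set.Icc (p.eval s) (p.eval y) :=
      ⟨by rw [hpeval]; exact h, le_of_lt hyval⟩
    obtain ⟨x, hx, hxval⟩ := intermediate_value_Icc hy hcont h0mem
    have : x ≤ tH := htH.2 (by rw [Set.mem_setOf_eq, ← hpeval]; exact hxval)
    exact absurd (lt_of_lt_of_le hs hx.1) (not_lt.mpr this)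
  -- case split on r
  rcases eq_or_lt_of_le hr0 with hre | hrpos
  · -- r = 0
    rw [Finset.sum_eq_single (∅ : Finset (Sym2 V))]
    · simp
    · intro M hM hMne
      have hc : M.card ≠ 0 := by simpa [Finset.card_eq_zero] using hMne
      rw [← hre]
      simp [zero_pow hc]
    · intro h; exact absurd (empty_mem_matchings H) h
  · -- r > 0
    have hx : 0 < r * t := mul_pos hrpos ht0
    have htHne : tH ≠ 0 := by
      rintro rfl
      simp at hr
      linarith
    set s : ℝ := 1 / Real.sqrt (r * t) with hsdef
    have hsq : 0 < Real.sqrt (r * t) := Real.sqrt_pos.mpr hx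
    have hspos : 0 < s := by positivity
    have hxs : r * t = 1 / s ^ 2 := by
      rw [hsdef]
      rw [one_div, one_div, inv_pow, inv_inv, Real.sq_sqrt hx.le]
    have hstH : tH < s := by
      rcases lt_or_gt_of_ne htHne with hneg | hposT
      · exact lt_trans hneg hspos
      · have hxlt : r * t < 1 / tH ^ 2 := by
          calc r * t ≤ r * 1 := by nlinarith
            _ = r := mul_one r
            _ < 1 / tH ^ 2 := hr
        have h1 : Real.sqrt (r * t) < 1 / tH := by
          have : (1 / tH) ^ 2 = 1 / tH ^ 2 := by ring
          have h2 : Real.sqrt (r * t) < Real.sqrt (1 / tH ^ 2) :=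
            Real.sqrt_lt_sqrt hx.le hxlt
          rwa [← this, Real.sqrt_sq (by positivity)] at h2
        rw [hsdef]
        rw [lt_div_iff₀ hsq]
        calc tH * Real.sqrt (r * t) < tH * (1 / tH) := by
              exact mul_lt_mul_of_pos_left h1 hposT
          _ = 1 := by field_simp
    have hmps : 0 < mp H s := hpos s hstH
    have h1 : s ^ 2 * (r * t) = 1 := by
      rw [hsdef, div_pow, one_pow, Real.sq_sqrt hx.le]
      field_simp
    have hkey : mp H s = s ^ n * ∑ M ∈ matchings H, (-1 : ℝ) ^ M.card * (r * t) ^ M.card := by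
      rw [mp, Finset.mul_sum]
      refine Finset.sum_congr rfl fun M hM => ?_
      have hle := matchings_card_le H hM
      have hs2 : s ^ n = s ^ (n - 2 * M.card) * (s ^ 2) ^ M.card := by
        rw [← pow_mul, ← pow_add, Nat.sub_add_cancel hle]
      calc (-1 : ℝ) ^ M.card * s ^ (n - 2 * M.card)
          = (-1 : ℝ) ^ M.card * s ^ (n - 2 * M.card) * (s ^ 2 * (r * t)) ^ M.card := by
            rw [h1, one_pow, mul_one]
        _ = s ^ n * ((-1 : ℝ) ^ M.card * (r * t) ^ M.card) := by
            rw [hs2, mul_pow]; ring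
    have hsn : 0 < s ^ n := pow_pos hspos n
    nlinarith [hmps, hsn, hkey]
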